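/- arXiv:2006.06970 — 2 statements merged into one kernel-verified Lean document; each statement's English description precedes it below -/
import Mathlib

section
/- A natural number N has last Zeckendorf digit d_0 = 1 if and only if N+1 belongs to the upper Wythoff sequence, i.e., N = ⌊nφ²⌋ - 1 for some positive integer n, where φ = (1+√5)/2. -/
noncomputable def phi : ℝ := (1 + Real.sqrt 5) / 2

/-- Lower Wythoff sequence. -/
noncomputable def A (n : ℕ) : ℕ := (⌊(n : ℝ) * phi⌋).toNat

/-- Upper Wythoff sequence. -/
noncomputable def B (n : ℕ) : ℕ := (⌊(n : ℝ) * phi ^ 2⌋).toNat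

/-- `d` is the digit sequence of the Zeckendorf expansion of `N`:
digits are 0/1, no two consecutive 1's, finitely many nonzero digits,
and `N = Σ dᵢ · F_{i+2}`. -/
def IsZeck (N : ℕ) (d : ℕ → ℕ) : Prop :=
  (∀ i, d i ≤ 1) ∧ (∀ i, ¬(d i = 1 ∧ d (i + 1) = 1)) ∧
  (Function.support d).Finite ∧ N = ∑ᶠ i, d i * Nat.fib (i + 2)

open Real goldenRatio Finset

/-! ### Auxiliary lemmas -/

lemma phi_eq_gold : phi = goldenRatio := rfl

lemma psi_neg : ψ < 0 := goldenConj_neg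
lemma psi_gt : -1 < ψ := neg_one_lt_goldenConj
lemma psi_sq : ψ ^ 2 = ψ + 1 := goldenConj_sq
lemma psi_sq_pos : 0 < ψ ^ 2 := by nlinarith [psi_neg]

lemma one_sub_psi_sq : 1 - ψ ^ 2 = -ψ := by rw [psi_sq]; ring

lemma psi_sq_lt_one : ψ ^ 2 < 1 := by nlinarith [psi_neg, psi_gt]

lemma psi_cube : ψ ^ 3 = 2 * ψ + 1 := by
  linear_combination (ψ + 1) * psi_sq

lemma psi_four : ψ ^ 4 = 3 * ψ + 2 := by
  linear_combination (ψ ^ 2 + ψ + 2) * psi_sq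

lemma psi_five : ψ ^ 5 = 5 * ψ + 3 := by
  linear_combination (ψ ^ 3 + ψ ^ 2 + 2 * ψ + 3) * psi_sq

/-- Geometric-type bound: sum of `q^e` over a finset of exponents all `≥ m`
and all congruent to `m` mod 2 is at most `q^m/(1-q^2)`. -/
lemma sum_pow_le_aux (q : ℝ) (hq0 : 0 < q) (hq1 : q < 1) (t : Finset ℕ) (m : ℕ)
    (ht : ∀ e ∈ t, m ≤ e ∧ e % 2 = m % 2) :
    ∑ e ∈ t, q ^ e ≤ q ^ m / (1 - q ^ 2) := by
  have hq2 : q ^ 2 < 1 := by nlinarith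
  have hq2' : (0:ℝ) < 1 - q ^ 2 := by linarith
  set K := t.sup id + 1 with hK
  have hsub : t ⊆ (Finset.range K).image (fun k => m + 2 * k) := by
    intro e he
    obtain ⟨h1, h2⟩ := ht e he
    refine Finset.mem_image.2 ⟨(e - m) / 2, Finset.mem_range.2 ?_, by omega⟩
    have : e ≤ t.sup id := Finset.le_sup (f := id) he
    omega
  calc ∑ e ∈ t, q ^ e
      ≤ ∑ e ∈ (Finset.range K).image (fun k => m + 2 * k), q ^ e :=
        Finset.sum_le_sum_of_subset_of_nonneg hsub (fun i _ _ => (pow_pos hq0 i).le)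
    _ = ∑ k ∈ Finset.range K, q ^ (m + 2 * k) :=
        Finset.sum_image (by intro a _ b _ h; simp only at h; omega)
    _ = q ^ m * ∑ k ∈ Finset.range K, (q ^ 2) ^ k := by
        rw [Finset.mul_sum]
        exact Finset.sum_congr rfl fun k _ => by rw [pow_add, pow_mul]
    _ ≤ q ^ m / (1 - q ^ 2) := by
        rw [geom_sum_eq (by nlinarith : q ^ 2 ≠ 1)]
        rw [div_eq_mul_inv (q ^ m)]
        apply mul_le_mul_of_nonneg_left _ (pow_pos hq0 m).le
        rw [show ((q^2) ^ K - 1) / (q ^ 2 - 1) = (1 - (q^2) ^ K) / (1 - q ^ 2) by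
          rw [div_eq_div_iff (by linarith) (by linarith)]; ring]
        rw [div_le_iff₀ hq2', inv_mul_cancel₀ (by linarith)]
        have : (0:ℝ) ≤ (q ^ 2) ^ K := pow_nonneg (by positivity) K
        linarith

/-- Upper bound for sums of powers of ψ with even exponents all at least `m` (m even). -/
lemma sum_psi_le (t : Finset ℕ) (m : ℕ) (hm : m % 2 = 0)
    (ht : ∀ e ∈ t, e % 2 = 0 → m ≤ e) :
    ∑ e ∈ t, ψ ^ e ≤ (-ψ) ^ m / (1 - ψ ^ 2) := by
  have hQ0 : (0:ℝ) < -ψ := by linarith [psi_neg]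
  have hQ1 : -ψ < 1 := by linarith [psi_gt]
  have hsplit := Finset.sum_filter_add_sum_filter_not t (fun e => e % 2 = 0) (fun e => ψ ^ e)
  have hodd : ∑ e ∈ t.filter (fun e => ¬ e % 2 = 0), ψ ^ e ≤ 0 := by
    apply Finset.sum_nonpos
    intro e he
    have : ¬ e % 2 = 0 := (Finset.mem_filter.1 he).2
    exact (Odd.pow_nonpos (Nat.odd_iff.2 (by omega)) psi_neg.le)
  have heven : ∑ e ∈ t.filter (fun e => e % 2 = 0), ψ ^ e
      = ∑ e ∈ t.filter (fun e => e % 2 = 0), (-ψ) ^ e := by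
    refine Finset.sum_congr rfl fun e he => ?_
    have he2 : e % 2 = 0 := (Finset.mem_filter.1 he).2
    rw [Even.neg_pow (Nat.even_iff.2 he2)]
  have hb := sum_pow_le_aux (-ψ) hQ0 hQ1 (t.filter (fun e => e % 2 = 0)) m
      (fun e he => ⟨ht e (Finset.mem_filter.1 he).1 (Finset.mem_filter.1 he).2,
        by rw [(Finset.mem_filter.1 he).2, hm]⟩)
  have : (-ψ) ^ 2 = ψ ^ 2 := by ring
  rw [this] at hb
  linarith [hsplit, hodd, heven.le, heven.ge, hb]

/-- Lower bound for sums of powers of ψ with odd exponents all at least `m` (m odd). -/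
lemma sum_psi_ge (t : Finset ℕ) (m : ℕ) (hm : m % 2 = 1)
    (ht : ∀ e ∈ t, e % 2 = 1 → m ≤ e) :
    -((-ψ) ^ m / (1 - ψ ^ 2)) ≤ ∑ e ∈ t, ψ ^ e := by
  have hQ0 : (0:ℝ) < -ψ := by linarith [psi_neg]
  have hQ1 : -ψ < 1 := by linarith [psi_gt]
  have hsplit := Finset.sum_filter_add_sum_filter_not t (fun e => e % 2 = 1) (fun e => ψ ^ e)
  have heven : 0 ≤ ∑ e ∈ t.filter (fun e => ¬ e % 2 = 1), ψ ^ e := by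
    apply Finset.sum_nonneg
    intro e he
    have : ¬ e % 2 = 1 := (Finset.mem_filter.1 he).2
    exact (Even.pow_nonneg (Nat.even_iff.2 (by omega)) ψ)
  have hodd : ∑ e ∈ t.filter (fun e => e % 2 = 1), ψ ^ e
      = -∑ e ∈ t.filter (fun e => e % 2 = 1), (-ψ) ^ e := by
    rw [← Finset.sum_neg_distrib]
    refine Finset.sum_congr rfl fun e he => ?_
    have he2 : e % 2 = 1 := (Finset.mem_filter.1 he).2
    rw [Odd.neg_pow (Nat.odd_iff.2 he2)]
    ring
  have hb := sum_pow_le_aux (-ψ) hQ0 hQ1 (t.filter (fun e => e % 2 = 1)) m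
      (fun e he => ⟨ht e (Finset.mem_filter.1 he).1 (Finset.mem_filter.1 he).2,
        by rw [(Finset.mem_filter.1 he).2, hm]⟩)
  have : (-ψ) ^ 2 = ψ ^ 2 := by ring
  rw [this] at hb
  linarith [hsplit, heven, hodd.le, hodd.ge, hb]

/-- Irrationality of `m * ψ^2` for `m ≠ 0`. -/
lemma irr_mul_psi_sq (m : ℕ) (hm : m ≠ 0) : Irrational ((m:ℝ) * ψ ^ 2) := by
  have h1 : Irrational (ψ ^ 2) := by
    rw [psi_sq]
    have := goldenConj_irrational.add_natCast 1
    simpa using this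
  exact h1.natCast_mul hm

lemma irr_mul_phi_sq (n : ℕ) (hn : n ≠ 0) : Irrational ((n:ℝ) * goldenRatio ^ 2) := by
  have h1 : Irrational (goldenRatio ^ 2) := by
    rw [goldenRatio_sq]
    have := goldenRatio_irrational.add_natCast 1
    simpa using this
  exact h1.natCast_mul hn

lemma psi_sq_mul_gold_sq : ψ ^ 2 * goldenRatio ^ 2 = 1 := by
  have h := goldenRatio_mul_goldenConj
  nlinarith [h]

/-- Membership criterion for the upper Wythoff sequence in terms of fractional parts. -/
lemma upper_wythoff_iff (m : ℕ) (hm : 0 < m) :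
    (∃ n : ℕ, 0 < n ∧ ⌊(n:ℝ) * phi ^ 2⌋ = (m:ℤ)) ↔
      1 - ψ ^ 2 < Int.fract ((m:ℝ) * ψ ^ 2) := by
  rw [phi_eq_gold]
  have hψ2 := psi_sq_pos
  have hφ2 : (0:ℝ) < goldenRatio ^ 2 := by positivity
  constructor
  · rintro ⟨n, hn, hfl⟩
    have h := Int.floor_eq_iff.1 hfl
    have h1 : (m:ℝ) ≤ (n:ℝ) * goldenRatio ^ 2 := by exact_mod_cast h.1
    have h2 : (n:ℝ) * goldenRatio ^ 2 < (m:ℝ) + 1 := by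
      have := h.2; push_cast at this ⊢; linarith
    have h1' : (m:ℝ) < (n:ℝ) * goldenRatio ^ 2 := by
      rcases h1.lt_or_eq with h' | h'
      · exact h'
      · exact absurd (by exact_mod_cast h'.symm) ((irr_mul_phi_sq n hn.ne').ne_int (m:ℤ))
    have h4 : (n:ℝ) * goldenRatio ^ 2 * ψ ^ 2 = (n:ℝ) := by
      linear_combination (n:ℝ) * psi_sq_mul_gold_sq
    have hA : (m:ℝ) * ψ ^ 2 < (n:ℝ) := by
      have h3 : (m:ℝ) * ψ ^ 2 < (n:ℝ) * goldenRatio ^ 2 * ψ ^ 2 :=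
        mul_lt_mul_of_pos_right h1' hψ2
      linarith
    have hB : (n:ℝ) < ((m:ℝ) + 1) * ψ ^ 2 := by
      have h3 : (n:ℝ) * goldenRatio ^ 2 * ψ ^ 2 < ((m:ℝ) + 1) * ψ ^ 2 :=
        mul_lt_mul_of_pos_right h2 hψ2
      linarith
    have hfloor_lt : (⌊(m:ℝ) * ψ ^ 2⌋ : ℝ) + 1 ≤ (n:ℝ) := by
      have : ⌊(m:ℝ) * ψ ^ 2⌋ < (n:ℤ) := by
        apply Int.floor_lt.2
        push_cast; linarith
      exact_mod_cast this
    rw [← Int.self_sub_floor]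
    nlinarith [hB, hfloor_lt]
  · intro h
    set x := (m:ℝ) * ψ ^ 2 with hx
    have hx0 : 0 < x := by positivity
    have hfr : Int.fract x = x - ⌊x⌋ := (Int.self_sub_floor x).symm
    have hA : x < (⌊x⌋:ℝ) + 1 := by
      have := Int.fract_lt_one x; rw [hfr] at this; linarith
    have hB : (⌊x⌋:ℝ) + 1 < x + ψ ^ 2 := by
      rw [hfr] at h; linarith
    have hn0 : 0 < ⌊x⌋ + 1 := by
      have : (0:ℝ) < (⌊x⌋:ℝ) + 1 := lt_trans hx0 hA
      exact_mod_cast this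
    refine ⟨(⌊x⌋ + 1).toNat, by omega, ?_⟩
    have hcast : (((⌊x⌋ + 1).toNat : ℕ) : ℝ) = (⌊x⌋:ℝ) + 1 := by
      exact_mod_cast congrArg (fun z : ℤ => (z : ℝ)) (Int.toNat_of_nonneg hn0.le)
    rw [Int.floor_eq_iff]
    constructor
    · -- m ≤ n φ²
      rw [hcast]
      have : x * goldenRatio ^ 2 < ((⌊x⌋:ℝ) + 1) * goldenRatio ^ 2 :=
        mul_lt_mul_of_pos_right hA hφ2
      have hxg : x * goldenRatio ^ 2 = (m:ℝ) := by
        rw [hx]; linear_combination (m:ℝ) * psi_sq_mul_gold_sq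
      push_cast
      linarith
    · rw [hcast]
      have : ((⌊x⌋:ℝ) + 1) * goldenRatio ^ 2 < (x + ψ ^ 2) * goldenRatio ^ 2 :=
        mul_lt_mul_of_pos_right hB hφ2
      have hxg : (x + ψ ^ 2) * goldenRatio ^ 2 = (m:ℝ) + 1 := by
        rw [hx]; linear_combination ((m:ℝ) + 1) * psi_sq_mul_gold_sq
      push_cast
      linarith

/-! ### Zeckendorf existence -/

lemma le_fib_add_two (n : ℕ) : n + 1 ≤ Nat.fib (n + 2) := by
  induction n with
  | zero => simp
  | succ k ih =>
    have h1 : 0 < Nat.fib (k + 1) := Nat.fib_pos.2 (by omega)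
    have h2 : Nat.fib (k + 1 + 2) = Nat.fib (k + 1) + Nat.fib (k + 2) := Nat.fib_add_two
    omega

lemma zeck_finset_exists (N : ℕ) : ∃ s : Finset ℕ,
    (∀ i ∈ s, i + 1 ∉ s) ∧ (∀ i ∈ s, Nat.fib (i + 2) ≤ N) ∧ N = ∑ i ∈ s, Nat.fib (i + 2) := by
  induction N using Nat.strong_induction_on with
  | _ N ih =>
    rcases Nat.eq_zero_or_pos N with h0 | h0
    · exact ⟨∅, by simp, by simp, by simp [h0]⟩
    · have hP0 : Nat.fib (0 + 2) ≤ N := by simp; omega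
      have hkN : Nat.fib (Nat.findGreatest (fun j => Nat.fib (j + 2) ≤ N) N + 2) ≤ N :=
        Nat.findGreatest_spec (P := fun j => Nat.fib (j + 2) ≤ N) (Nat.zero_le N) hP0
      set k := Nat.findGreatest (fun j => Nat.fib (j + 2) ≤ N) N with hk
      have hfibk : k + 1 ≤ Nat.fib (k + 2) := le_fib_add_two k
      have hk1N : k + 1 ≤ N := le_trans hfibk hkN
      have hnot : ¬ (Nat.fib (k + 1 + 2) ≤ N) :=
        Nat.findGreatest_is_greatest (P := fun j => Nat.fib (j + 2) ≤ N)
          (by omega) hk1N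
      have h312 : k + 1 + 2 = k + 3 := by omega
      rw [h312] at hnot
      have hlt : N < Nat.fib (k + 3) := by omega
      have hrec : Nat.fib (k + 3) = Nat.fib (k + 1) + Nat.fib (k + 2) := Nat.fib_add_two
      set N' := N - Nat.fib (k + 2) with hN'
      have hfibpos : 0 < Nat.fib (k + 2) := Nat.fib_pos.2 (by omega)
      have hN'lt : N' < N := by omega
      obtain ⟨s', hs1, hs2, hs3⟩ := ih N' hN'lt
      have hsmall : ∀ i ∈ s', i + 2 < k + 1 := by
        intro i hi
        have h1 : Nat.fib (i + 2) ≤ N' := hs2 i hi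
        have h3 : Nat.fib (i + 2) < Nat.fib (k + 1) := by omega
        by_contra hcon
        have := Nat.fib_mono (show k + 1 ≤ i + 2 by omega)
        omega
      have hknot : k ∉ s' := fun h => by have := hsmall k h; omega
      refine ⟨insert k s', ?_, ?_, ?_⟩
      · intro i hi
        rcases Finset.mem_insert.1 hi with rfl | hi'
        · intro hmem
          rcases Finset.mem_insert.1 hmem with h | h
          · omega
          · have := hsmall _ h; omega
        · intro hmem
          rcases Finset.mem_insert.1 hmem with h | h
          · have := hsmall i hi'; omega
          · exact hs1 i hi' h
      · intro i hi
        rcases Finset.mem_insert.1 hi with rfl | hi'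
        · exact hkN
        · exact le_trans (hs2 i hi') (by omega)
      · rw [Finset.sum_insert hknot, ← hs3]; omega

lemma isZeck_of_finset (N : ℕ) (s : Finset ℕ) (hcons : ∀ i ∈ s, i + 1 ∉ s)
    (hsum : N = ∑ i ∈ s, Nat.fib (i + 2)) :
    IsZeck N (fun i => if i ∈ s then 1 else 0) := by
  refine ⟨fun i => by dsimp; split <;> omega, fun i => ?_, ?_, ?_⟩
  · rintro ⟨h1, h2⟩
    dsimp at h1 h2
    by_cases hi : i ∈ s
    · by_cases hi1 : i + 1 ∈ s
      · exact hcons i hi hi1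
      · simp [hi1] at h2
    · simp [hi] at h1
  · apply Set.Finite.subset s.finite_toSet
    intro i hi
    simp only [Function.mem_support, ne_eq] at hi
    rw [Finset.mem_coe]
    by_contra h
    exact hi (by simp [h])
  · rw [finsum_eq_sum_of_support_subset (s := s) _ ?_]
    · rw [hsum]
      refine Finset.sum_congr rfl fun i hi => by simp [hi]
    · intro i hi
      simp only [Function.mem_support, ne_eq] at hi
      rw [Finset.mem_coe]
      by_contra h
      exact hi (by simp [h])

lemma finset_of_isZeck (N : ℕ) (d : ℕ → ℕ) (h : IsZeck N d) :
    ∃ s : Finset ℕ, (∀ i ∈ s, i + 1 ∉ s) ∧ (∀ i, i ∈ s ↔ d i = 1) ∧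
      N = ∑ i ∈ s, Nat.fib (i + 2) := by
  obtain ⟨hle, hcons, hfin, hsum⟩ := h
  have hmem : ∀ i, i ∈ hfin.toFinset ↔ d i = 1 := by
    intro i
    rw [Set.Finite.mem_toFinset, Function.mem_support]
    have := hle i
    omega
  refine ⟨hfin.toFinset, ?_, hmem, ?_⟩
  · intro i hi hi1
    exact hcons i ⟨(hmem i).1 hi, (hmem (i + 1)).1 hi1⟩
  · rw [hsum, finsum_eq_sum_of_support_subset (s := hfin.toFinset) _ ?_]
    · refine Finset.sum_congr rfl fun i hi => by rw [(hmem i).1 hi, one_mul]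
    · intro i hi
      simp only [Function.mem_support, ne_eq] at hi
      rw [Finset.mem_coe, Set.Finite.mem_toFinset, Function.mem_support]
      intro h0
      exact hi (by simp [h0])

/-! ### The key fractional-part computation -/

lemma key_decomp (N : ℕ) (s : Finset ℕ) (hsum : N = ∑ i ∈ s, Nat.fib (i + 2)) :
    ∃ K : ℤ, ((N:ℝ) + 1) * ψ ^ 2 = (K:ℝ) + (∑ i ∈ s, ψ ^ (i + 2) + ψ ^ 2) := by
  refine ⟨2 * (N:ℤ) - ∑ i ∈ s, (Nat.fib (i + 3) : ℤ), ?_⟩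
  have hφ : (N:ℝ) * goldenRatio
      = (∑ i ∈ s, (Nat.fib (i + 3) : ℝ)) - ∑ i ∈ s, ψ ^ (i + 2) := by
    have hNr : (N:ℝ) = ∑ i ∈ s, (Nat.fib (i + 2) : ℝ) := by rw [hsum]; push_cast; ring
    rw [hNr, Finset.sum_mul, ← Finset.sum_sub_distrib]
    refine Finset.sum_congr rfl fun i _ => ?_
    have h := fib_succ_sub_goldenRatio_mul_fib (i + 2)
    have h32 : i + 2 + 1 = i + 3 := rfl
    rw [h32] at h
    rw [mul_comm]
    linarith
  have hψφ : ψ = 1 - goldenRatio := by linarith [one_sub_goldenRatio]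
  push_cast
  linear_combination (N:ℝ) * psi_sq + (N:ℝ) * hψφ - hφ

lemma fract_of_decomp (x v : ℝ) (K : ℤ) (hx : x = (K:ℝ) + v) (h0 : 0 ≤ v) (h1 : v < 1) :
    Int.fract x = v := by
  rw [hx, Int.fract_intCast_add, Int.fract_eq_self.2 ⟨h0, h1⟩]

lemma fract_case (N : ℕ) (s : Finset ℕ) (hcons : ∀ i ∈ s, i + 1 ∉ s)
    (hsum : N = ∑ i ∈ s, Nat.fib (i + 2)) :
    (0 ∈ s → 1 - ψ ^ 2 < Int.fract (((N:ℝ) + 1) * ψ ^ 2)) ∧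
    (0 ∉ s → Int.fract (((N:ℝ) + 1) * ψ ^ 2) < 1 - ψ ^ 2) := by
  obtain ⟨K, hK⟩ := key_decomp N s hsum
  set ε := ∑ i ∈ s, ψ ^ (i + 2) with hε
  set v := ε + ψ ^ 2 with hv
  have hψne : (-ψ) ≠ 0 := by have := psi_neg; intro h; linarith [neg_eq_zero.1 h]
  have hden : 1 - ψ ^ 2 = -ψ := one_sub_psi_sq
  have hne_top : v ≠ 1 := by
    intro h
    apply (irr_mul_psi_sq (N + 1) (by omega)).ne_int (K + 1)
    push_cast
    linear_combination hK + h
  have hne_bot : v ≠ 1 - ψ ^ 2 := by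
    intro h
    apply (irr_mul_psi_sq (N + 2) (by omega)).ne_int (K + 1)
    push_cast
    linear_combination hK + h
  have hne_zero : v ≠ 0 := by
    intro h
    apply (irr_mul_psi_sq (N + 1) (by omega)).ne_int K
    push_cast
    linear_combination hK + h
  constructor
  · -- 0 ∈ s
    intro h0
    have h1s : 1 ∉ s := hcons 0 h0
    have hsplit : ε = ψ ^ 2 + ∑ i ∈ s.erase 0, ψ ^ (i + 2) := by
      rw [hε, ← Finset.add_sum_erase s _ h0]
    set tail := ∑ i ∈ s.erase 0, ψ ^ (i + 2) with htail
    set t := (s.erase 0).image (fun i => i + 2) with ht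
    have htimg : tail = ∑ e ∈ t, ψ ^ e := by
      rw [htail, ht, Finset.sum_image (by intro a _ b _ h; simp only at h; omega)]
    have htm : ∀ e ∈ t, 4 ≤ e := by
      intro e he
      obtain ⟨i, hi, rfl⟩ := Finset.mem_image.1 he
      have hi0 : i ≠ 0 := Finset.ne_of_mem_erase hi
      have hi1 : i ≠ 1 := fun h => h1s (h ▸ Finset.mem_of_mem_erase hi)
      omega
    have hub := sum_psi_le t 4 (by norm_num) (fun e he _ => htm e he)
    have hlb := sum_psi_ge t 5 (by norm_num) (fun e he ho => by have := htm e he; omega)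
    have hub' : (-ψ) ^ 4 / (1 - ψ ^ 2) = -ψ ^ 3 := by
      rw [hden, div_eq_iff hψne]; ring
    have hlb' : (-ψ) ^ 5 / (1 - ψ ^ 2) = ψ ^ 4 := by
      rw [hden, div_eq_iff hψne]; ring
    rw [hub'] at hub
    rw [hlb'] at hlb
    rw [← htimg] at hub hlb
    have hvub : v ≤ 1 := by
      rw [hv, hsplit]
      have h3 := psi_cube
      have h2 := psi_sq
      linarith
    have hvlb : 1 - ψ ^ 2 ≤ v := by
      rw [hv, hsplit]
      have h4 := psi_four
      have h2 := psi_sq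
      linarith
    have hv0 : 0 ≤ v := by
      have := psi_neg
      rw [hden] at hvlb
      linarith
    have hfr : Int.fract (((N:ℝ) + 1) * ψ ^ 2) = v :=
      fract_of_decomp _ v K hK hv0 (lt_of_le_of_ne hvub hne_top)
    rw [hfr]
    exact lt_of_le_of_ne hvlb (Ne.symm hne_bot)
  · -- 0 ∉ s
    intro h0
    set t := s.image (fun i => i + 2) with ht
    have htimg : ε = ∑ e ∈ t, ψ ^ e := by
      rw [hε, ht, Finset.sum_image (by intro a _ b _ h; simp only at h; omega)]
    have htm : ∀ e ∈ t, 3 ≤ e := by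
      intro e he
      obtain ⟨i, hi, rfl⟩ := Finset.mem_image.1 he
      have hi0 : i ≠ 0 := fun h => h0 (h ▸ hi)
      omega
    have hub := sum_psi_le t 4 (by norm_num)
      (fun e he hev => by have := htm e he; omega)
    have hlb := sum_psi_ge t 3 (by norm_num) (fun e he _ => htm e he)
    have hub' : (-ψ) ^ 4 / (1 - ψ ^ 2) = -ψ ^ 3 := by
      rw [hden, div_eq_iff hψne]; ring
    have hlb' : (-ψ) ^ 3 / (1 - ψ ^ 2) = ψ ^ 2 := by
      rw [hden, div_eq_iff hψne]; ring
    rw [hub'] at hub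
    rw [hlb'] at hlb
    rw [← htimg] at hub hlb
    have hvub : v ≤ 1 - ψ ^ 2 := by
      rw [hv]
      have h3 := psi_cube
      have h2 := psi_sq
      linarith
    have hv0 : 0 ≤ v := by rw [hv]; linarith
    have hv1 : v < 1 := by
      have := psi_sq_pos
      linarith
    have hfr : Int.fract (((N:ℝ) + 1) * ψ ^ 2) = v :=
      fract_of_decomp _ v K hK hv0 hv1
    rw [hfr]
    exact lt_of_le_of_ne hvub hne_bot

/-- N has last Zeckendorf digit 1 iff N+1 is in the upper Wythoff sequence. -/
theorem zeck_digit0_eq_one_iff (N : ℕ) :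
    (∃ d : ℕ → ℕ, IsZeck N d ∧ d 0 = 1) ↔
      ∃ n : ℕ, 0 < n ∧ (N : ℤ) = ⌊(n : ℝ) * phi ^ 2⌋ - 1 := by
  have hcrit := upper_wythoff_iff (N + 1) (by omega)
  have hcast : (((N + 1 : ℕ)) : ℝ) = (N:ℝ) + 1 := by push_cast; ring
  rw [hcast] at hcrit
  constructor
  · rintro ⟨d, hz, hd0⟩
    obtain ⟨s, hcons, hmem, hsum⟩ := finset_of_isZeck N d hz
    have h0s : 0 ∈ s := (hmem 0).2 hd0
    have hfr := (fract_case N s hcons hsum).1 h0s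
    obtain ⟨n, hn, hfl⟩ := hcrit.2 hfr
    refine ⟨n, hn, ?_⟩
    have : ((N + 1 : ℕ) : ℤ) = (N:ℤ) + 1 := by push_cast; ring
    omega
  · rintro ⟨n, hn, hNf⟩
    have hfl : ⌊(n:ℝ) * phi ^ 2⌋ = ((N + 1 : ℕ) : ℤ) := by push_cast; omega
    have hfr := hcrit.1 ⟨n, hn, hfl⟩
    obtain ⟨s, hcons, _, hsum⟩ := zeck_finset_exists N
    have h0s : 0 ∈ s := by
      by_contra h0
      have := (fract_case N s hcons hsum).2 h0
      linarith
    exact ⟨fun i => if i ∈ s then 1 else 0, isZeck_of_finset N s hcons hsum, by simp [h0s]⟩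
end

section
/- If V(n) = p⌊nφ⌋ + qn + r is a generalized Beatty sequence with integer parameters (p,q,r) and φ the golden ratio, then V∘A is a generalized Beatty sequence with parameters (p+q, p, r−p), i.e., V(A(n)) = (p+q)⌊nφ⌋ + pn + r − p for all n ≥ 1, where A(n) = ⌊nφ⌋. -/
lemma sqrt5_sq : Real.sqrt 5 ^ 2 = 5 := Real.sq_sqrt (by norm_num)

lemma phi_sq : phi ^ 2 = phi + 1 := by
  have h := sqrt5_sq
  unfold phi
  nlinarith [h]

lemma phi_gt_one : 1 < phi := by
  have h := sqrt5_sq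
  have h0 := Real.sqrt_nonneg 5
  unfold phi
  nlinarith

lemma phi_lt_two : phi < 2 := by
  have h := sqrt5_sq
  have h0 := Real.sqrt_nonneg 5
  unfold phi
  nlinarith

lemma phi_irrational : Irrational phi := by
  have h5 : Irrational (Real.sqrt 5) := (by norm_num : Nat.Prime 5).irrational_sqrt
  have h1 : Irrational (1 + Real.sqrt 5) := by simpa using h5.ratCast_add (q := 1)
  have := h1.div_intCast (by norm_num : (2:ℤ) ≠ 0)
  simpa [phi] using this

lemma AA (n : ℕ) (hn : 1 ≤ n) : (A (A n) : ℤ) = (A n : ℤ) + n - 1 := by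
  have hφ2 := phi_sq
  have hφ1 := phi_gt_one
  have hφ2' := phi_lt_two
  set x : ℝ := (n : ℝ) * phi with hx
  have hxpos : 0 < x := by
    have : (0:ℝ) < (n:ℝ) := by exact_mod_cast hn
    positivity
  have hxirr : Irrational x := (phi_irrational.natCast_mul (by omega : n ≠ 0))
  set m : ℤ := ⌊x⌋ with hm
  have hm0 : 0 ≤ m := Int.floor_nonneg.mpr hxpos.le
  set θ : ℝ := x - m with hθ
  have hθ0 : 0 < θ := by
    have := hxirr.ne_int m
    have h1 := Int.floor_le x
    rcases lt_or_eq_of_le h1 with h | h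
    · rw [hθ]; linarith
    · exact absurd h.symm this
  have hθ1 : θ < 1 := by
    have := Int.lt_floor_add_one x
    simp only [hθ]; linarith
  -- m * phi = m + n - θ*(phi - 1)
  have key : (m : ℝ) * phi = m + n - θ * (phi - 1) := by
    have hxm : (m : ℝ) = x - θ := by simp [hθ]
    rw [hxm, hx]
    nlinarith [hφ2]
  have hfloor : ⌊(m : ℝ) * phi⌋ = m + n - 1 := by
    rw [Int.floor_eq_iff]
    constructor
    · push_cast
      rw [key]
      nlinarith
    · push_cast
      rw [key]
      nlinarith
  have hAn : (A n : ℤ) = m := by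
    simp [A, ← hx, ← hm, Int.toNat_of_nonneg hm0]
  have hAnR : ((A n : ℕ) : ℝ) = (m : ℝ) := by exact_mod_cast hAn
  have : (A (A n) : ℤ) = m + n - 1 := by
    have h1 : 0 ≤ m + (n : ℤ) - 1 := by
      have : (1:ℤ) ≤ n := by exact_mod_cast hn
      omega
    have h2 : ⌊((A n : ℕ) : ℝ) * phi⌋ = m + n - 1 := by rw [hAnR]; exact hfloor
    rw [show A (A n) = (⌊((A n : ℕ) : ℝ) * phi⌋).toNat from rfl, h2,
      Int.toNat_of_nonneg h1]
  rw [this, hAn]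

/-- If V is a generalized Beatty sequence with parameters (p,q,r), then V∘A is a
generalized Beatty sequence with parameters (p+q, p, r−p). -/
theorem gbs_comp_A (p q r : ℤ) (V : ℕ → ℤ)
    (hV : ∀ n : ℕ, V n = p * (A n : ℤ) + q * n + r) :
    ∀ n : ℕ, 1 ≤ n → V (A n) = (p + q) * (A n : ℤ) + p * n + r - p := by
  intro n hn
  rw [hV (A n), AA n hn]
  ring
end
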